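/- Let K ≥ 0, R > 0, and for 0 ≤ k ≤ K suppose z_t^{(k)}, z_{t+1}^{(k)} ∈ [0, 1] and w_t^{(k)}, w_{t+1}^{(k)} ∈ ℝ^d. Define recursively x_t^{(K+1)} = 0, and for k = K down to 0: x_t^{(k)} = (1 - z_t^{(k)})·Π_{B(0,R)}(x_t^{(k+1)}) + w_t^{(k)}, where Π_{B(0,R)} denotes projection onto the Euclidean ball of radius R (and similarly for t+1). Then ‖x_t^{(0)} - x_{t+1}^{(0)}‖ ≤ R·∑_{k=0}^{K} |z_t^{(k)} - z_{t+1}^{(k)}| + ∑_{k=0}^{K} ‖w_t^{(k)} - w_{t+1}^{(k)}‖. -/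

import Mathlib

open RealInnerProductSpace

private lemma sq_norm_le {E : Type*} [NormedAddCommGroup E] (a b : E)
    (h : ‖a‖ ^ 2 ≤ ‖b‖ ^ 2) : ‖a‖ ≤ ‖b‖ := by
  have := Real.sqrt_le_sqrt h
  simpa [Real.sqrt_sq, norm_nonneg] using this

private lemma proj_mixed {E : Type*} [NormedAddCommGroup E] [InnerProductSpace ℝ E]
    (R : ℝ) (hR : 0 < R) (x y : E) (hx : ‖x‖ ≤ R) (hy : R < ‖y‖) :
    ‖x - (R / ‖y‖) • y‖ ≤ ‖x - y‖ := by
  set a := ‖x‖ with ha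
  set b := ‖y‖ with hb
  have hb0 : 0 < b := hR.trans hy
  set s : ℝ := R / b with hs
  have hs0 : 0 < s := div_pos hR hb0
  have hsb : s * b = R := div_mul_cancel₀ _ hb0.ne'
  have hs1 : s ≤ 1 := by rw [hs, div_le_one hb0]; exact hy.le
  have hc : ⟪x, y⟫ ≤ a * b := real_inner_le_norm x y
  apply sq_norm_le
  have e1 : ‖x - s • y‖ ^ 2 = a ^ 2 - 2 * (s * ⟪x, y⟫) + s ^ 2 * b ^ 2 := by
    rw [norm_sub_sq_real, real_inner_smul_right, norm_smul, Real.norm_eq_abs,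
      abs_of_pos hs0]; ring
  have e2 : ‖x - y‖ ^ 2 = a ^ 2 - 2 * ⟪x, y⟫ + b ^ 2 := by rw [norm_sub_sq_real]
  rw [e1, e2]
  nlinarith [sq_nonneg (b - R), mul_nonneg (sub_nonneg.2 (hc.trans (by nlinarith : a * b ≤ R * b))) (sub_nonneg.2 hs1)]

private lemma proj_lip {E : Type*} [NormedAddCommGroup E] [InnerProductSpace ℝ E]
    (R : ℝ) (hR : 0 < R) (x y : E) :
    ‖(if ‖x‖ ≤ R then x else (R / ‖x‖) • x) -
      (if ‖y‖ ≤ R then y else (R / ‖y‖) • y)‖ ≤ ‖x - y‖ := by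
  by_cases hx : ‖x‖ ≤ R <;> by_cases hy : ‖y‖ ≤ R <;> simp only [hx, hy, if_true, if_false, if_pos, if_neg]
  · exact le_refl _
  · exact proj_mixed R hR x y hx (lt_of_not_ge hy)
  · rw [norm_sub_rev, norm_sub_rev x y]
    exact proj_mixed R hR y x hy (lt_of_not_ge hx)
  · push_neg at hx hy
    set a := ‖x‖; set b := ‖y‖
    have ha0 : 0 < a := hR.trans hx
    have hb0 : 0 < b := hR.trans hy
    set s : ℝ := R / a with hsd
    set t : ℝ := R / b with htd
    have hs0 : 0 < s := div_pos hR ha0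
    have ht0 : 0 < t := div_pos hR hb0
    have hsa : s * a = R := div_mul_cancel₀ _ ha0.ne'
    have htb : t * b = R := div_mul_cancel₀ _ hb0.ne'
    have hs1 : s ≤ 1 := by rw [hsd, div_le_one ha0]; exact hx.le
    have ht1 : t ≤ 1 := by rw [htd, div_le_one hb0]; exact hy.le
    have hc : ⟪x, y⟫ ≤ a * b := real_inner_le_norm x y
    apply sq_norm_le
    have e1 : ‖s • x - t • y‖ ^ 2 = s ^ 2 * a ^ 2 - 2 * (s * (t * ⟪x, y⟫)) + t ^ 2 * b ^ 2 := by
      rw [norm_sub_sq_real, real_inner_smul_left, real_inner_smul_right, norm_smul, norm_smul,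
        Real.norm_eq_abs, Real.norm_eq_abs, abs_of_pos hs0, abs_of_pos ht0]; ring
    have e2 : ‖x - y‖ ^ 2 = a ^ 2 - 2 * ⟪x, y⟫ + b ^ 2 := by rw [norm_sub_sq_real]
    rw [e1, e2]
    nlinarith [sq_nonneg (a - b), mul_nonneg (sub_nonneg.2 hc) (sub_nonneg.2 (mul_le_one₀ hs1 ht0.le ht1)), mul_pos hs0 ht0]

private lemma proj_norm_le {E : Type*} [NormedAddCommGroup E] [InnerProductSpace ℝ E]
    (R : ℝ) (hR : 0 < R) (x : E) :
    ‖(if ‖x‖ ≤ R then x else (R / ‖x‖) • x)‖ ≤ R := by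
  split_ifs with h
  · exact h
  · push_neg at h
    have hx0 : 0 < ‖x‖ := hR.trans h
    rw [norm_smul, Real.norm_eq_abs, abs_of_pos (div_pos hR hx0), div_mul_cancel₀ _ hx0.ne']

theorem stmt15 {E : Type*} [NormedAddCommGroup E] [InnerProductSpace ℝ E]
    (K : ℕ) (R : ℝ) (hR : 0 < R)
    (z z' : ℕ → ℝ) (w w' : ℕ → E) (xa xb : ℕ → E)
    (hz : ∀ k ≤ K, z k ∈ Set.Icc (0 : ℝ) 1) (hz' : ∀ k ≤ K, z' k ∈ Set.Icc (0 : ℝ) 1)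
    (hxa0 : xa (K + 1) = 0) (hxb0 : xb (K + 1) = 0)
    (hxa : ∀ k ≤ K, xa k = (1 - z k) •
        (if ‖xa (k + 1)‖ ≤ R then xa (k + 1) else (R / ‖xa (k + 1)‖) • xa (k + 1)) + w k)
    (hxb : ∀ k ≤ K, xb k = (1 - z' k) •
        (if ‖xb (k + 1)‖ ≤ R then xb (k + 1) else (R / ‖xb (k + 1)‖) • xb (k + 1)) + w' k) :
    ‖xa 0 - xb 0‖ ≤ R * ∑ k ∈ Finset.range (K + 1), |z k - z' k|
      + ∑ k ∈ Finset.range (K + 1), ‖w k - w' k‖ := by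
  have main : ∀ m k, k + m = K + 1 →
      ‖xa k - xb k‖ ≤ R * ∑ j ∈ Finset.Ico k (K + 1), |z j - z' j|
        + ∑ j ∈ Finset.Ico k (K + 1), ‖w j - w' j‖ := by
    intro m
    induction m with
    | zero => intro k hk; simp at hk; subst hk; simp [hxa0, hxb0]
    | succ n ih =>
      intro k hk
      have hkK : k ≤ K := by omega
      have hk1 : k + 1 + n = K + 1 := by omega
      have IH := ih (k + 1) hk1
      set Pa := (if ‖xa (k + 1)‖ ≤ R then xa (k + 1) else (R / ‖xa (k + 1)‖) • xa (k + 1)) with hPa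
      set Pb := (if ‖xb (k + 1)‖ ≤ R then xb (k + 1) else (R / ‖xb (k + 1)‖) • xb (k + 1)) with hPb
      have hdecomp : xa k - xb k = (1 - z k) • (Pa - Pb) + (z' k - z k) • Pb + (w k - w' k) := by
        rw [hxa k hkK, hxb k hkK, ← hPa, ← hPb]
        module
      have hz0 := hz k hkK
      have h1 : ‖xa k - xb k‖ ≤ (1 - z k) * ‖Pa - Pb‖ + |z k - z' k| * R + ‖w k - w' k‖ := by
        rw [hdecomp]
        refine (norm_add_le _ _).trans (add_le_add_left ((norm_add_le _ _).trans (add_le_add ?_ ?_)) _)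
        · rw [norm_smul, Real.norm_eq_abs, abs_of_nonneg (by linarith [hz0.2])]
        · rw [norm_smul, Real.norm_eq_abs, abs_sub_comm]
          exact mul_le_mul_of_nonneg_left (proj_norm_le R hR _) (abs_nonneg _)
      have h2 : (1 - z k) * ‖Pa - Pb‖ ≤ ‖xa (k + 1) - xb (k + 1)‖ := by
        calc (1 - z k) * ‖Pa - Pb‖ ≤ 1 * ‖Pa - Pb‖ :=
              mul_le_mul_of_nonneg_right (by linarith [hz0.1]) (norm_nonneg _)
          _ = ‖Pa - Pb‖ := one_mul _
          _ ≤ ‖xa (k + 1) - xb (k + 1)‖ := proj_lip R hR _ _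
      have hsum1 : ∑ j ∈ Finset.Ico k (K + 1), |z j - z' j|
          = |z k - z' k| + ∑ j ∈ Finset.Ico (k + 1) (K + 1), |z j - z' j| := by
        rw [← Finset.insert_Ico_add_one_left_eq_Ico (show k < K + 1 by omega), Finset.sum_insert (by simp)]
      have hsum2 : ∑ j ∈ Finset.Ico k (K + 1), ‖w j - w' j‖
          = ‖w k - w' k‖ + ∑ j ∈ Finset.Ico (k + 1) (K + 1), ‖w j - w' j‖ := by
        rw [← Finset.insert_Ico_add_one_left_eq_Ico (show k < K + 1 by omega), Finset.sum_insert (by simp)]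
      rw [hsum1, hsum2]
      calc ‖xa k - xb k‖ ≤ (1 - z k) * ‖Pa - Pb‖ + |z k - z' k| * R + ‖w k - w' k‖ := h1
        _ ≤ ‖xa (k + 1) - xb (k + 1)‖ + |z k - z' k| * R + ‖w k - w' k‖ := by linarith
        _ ≤ (R * ∑ j ∈ Finset.Ico (k + 1) (K + 1), |z j - z' j|
              + ∑ j ∈ Finset.Ico (k + 1) (K + 1), ‖w j - w' j‖)
              + |z k - z' k| * R + ‖w k - w' k‖ := by linarith
        _ = R * (|z k - z' k| + ∑ j ∈ Finset.Ico (k + 1) (K + 1), |z j - z' j|)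
              + (‖w k - w' k‖ + ∑ j ∈ Finset.Ico (k + 1) (K + 1), ‖w j - w' j‖) := by ring
  have := main (K + 1) 0 (by omega)
  rw [Finset.range_eq_Ico]
  exact this
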